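/- For K-armed Gaussian bandit instances with variance σ² and a pure exploration problem, for any two mean vectors μ and μ', one has √(T*(μ)^{-1}) - √(T*(μ')^{-1}) ≤ (1/√(2σ²))·‖μ - μ'‖_∞, where T*(μ)^{-1} = sup_{w ∈ Δ_K} inf_{λ ∈ Alt_μ} Σ_i w_i (μ_i - λ_i)²/(2σ²). -/

import Mathlib

/-- `Tinv K σ2 Alt μ = (T*(μ))⁻¹ = sup_{w ∈ Δ_K} inf_{λ ∈ Alt μ} Σ_i w_i (μ_i - λ_i)²/(2σ²)`. -/
noncomputable def Tinv (K : ℕ) (σ2 : ℝ) (Alt : (Fin K → ℝ) → Set (Fin K → ℝ))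
    (μ : Fin K → ℝ) : ℝ :=
  sSup {x | ∃ w ∈ stdSimplex ℝ (Fin K), x =
    sInf {y | ∃ l ∈ Alt μ, y = ∑ i, w i * (μ i - l i) ^ 2 / (2 * σ2)}}

lemma sqrt_subadd {x y : ℝ} (hx : 0 ≤ x) (hy : 0 ≤ y) :
    Real.sqrt (x + y) ≤ Real.sqrt x + Real.sqrt y := by
  rw [Real.sqrt_le_left (by positivity)]
  nlinarith [Real.sq_sqrt hx, Real.sq_sqrt hy, Real.sqrt_nonneg x, Real.sqrt_nonneg y,
    mul_nonneg (Real.sqrt_nonneg x) (Real.sqrt_nonneg y)]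

lemma normw_eq (K : ℕ) (w x : Fin K → ℝ) (hw : ∀ i, 0 ≤ w i) :
    Real.sqrt (∑ i, w i * x i ^ 2) =
      ‖((WithLp.equiv 2 (Fin K → ℝ)).symm (fun i => Real.sqrt (w i) * x i))‖ := by
  rw [EuclideanSpace.norm_eq]
  refine congrArg _ (Finset.sum_congr rfl fun i _ => ?_)
  rw [show ((WithLp.equiv 2 (Fin K → ℝ)).symm (fun i => Real.sqrt (w i) * x i)).ofLp i =
      Real.sqrt (w i) * x i from rfl, Real.norm_eq_abs, sq_abs, mul_pow, Real.sq_sqrt (hw i)]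

lemma normw_triangle (K : ℕ) (w x y : Fin K → ℝ) (hw : ∀ i, 0 ≤ w i) :
    Real.sqrt (∑ i, w i * (x i + y i) ^ 2) ≤
      Real.sqrt (∑ i, w i * x i ^ 2) + Real.sqrt (∑ i, w i * y i ^ 2) := by
  rw [normw_eq K w _ hw, normw_eq K w x hw, normw_eq K w y hw]
  have h : ((WithLp.equiv 2 (Fin K → ℝ)).symm (fun i => Real.sqrt (w i) * (x i + y i))) =
      (WithLp.equiv 2 (Fin K → ℝ)).symm (fun i => Real.sqrt (w i) * x i) +
        (WithLp.equiv 2 (Fin K → ℝ)).symm (fun i => Real.sqrt (w i) * y i) := by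
    ext i
    show Real.sqrt (w i) * (x i + y i) = Real.sqrt (w i) * x i + Real.sqrt (w i) * y i
    ring
  rw [h]
  exact norm_add_le _ _

lemma normw_le_norm (K : ℕ) (w x : Fin K → ℝ) (hw : w ∈ stdSimplex ℝ (Fin K)) :
    Real.sqrt (∑ i, w i * x i ^ 2) ≤ ‖x‖ := by
  rw [show ‖x‖ = Real.sqrt (‖x‖ ^ 2) from (Real.sqrt_sq (norm_nonneg x)).symm]
  apply Real.sqrt_le_sqrt
  calc ∑ i, w i * x i ^ 2 ≤ ∑ i, w i * ‖x‖ ^ 2 := by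
        refine Finset.sum_le_sum fun i _ => ?_
        refine mul_le_mul_of_nonneg_left ?_ (hw.1 i)
        have h := norm_le_pi_norm x i
        rw [Real.norm_eq_abs] at h
        nlinarith [abs_nonneg (x i), sq_abs (x i)]
    _ = ‖x‖ ^ 2 := by rw [← Finset.sum_mul, hw.2, one_mul]

lemma normw_sum_le_sq (K : ℕ) (w x : Fin K → ℝ) (hw : w ∈ stdSimplex ℝ (Fin K)) :
    (∑ i, w i * x i ^ 2) ≤ ‖x‖ ^ 2 := by
  have h := normw_le_norm K w x hw
  rwa [Real.sqrt_le_left (norm_nonneg x)] at h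

/-- the inner set appearing in `Tinv` -/
def Sset (K : ℕ) (σ2 : ℝ) (Alt : (Fin K → ℝ) → Set (Fin K → ℝ))
    (ν w : Fin K → ℝ) : Set ℝ :=
  {y | ∃ l ∈ Alt ν, y = ∑ i, w i * (ν i - l i) ^ 2 / (2 * σ2)}

lemma Tinv_eq (K : ℕ) (σ2 : ℝ) (Alt : (Fin K → ℝ) → Set (Fin K → ℝ)) (μ : Fin K → ℝ) :
    Tinv K σ2 Alt μ =
      sSup {x | ∃ w ∈ stdSimplex ℝ (Fin K), x = sInf (Sset K σ2 Alt μ w)} := rfl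

/-- `√(T*(μ)⁻¹) - √(T*(μ')⁻¹) ≤ ‖μ - μ'‖_∞ / √(2σ²)`, for any alternative structure `Alt`
such that for all `μ, μ'` either `Alt μ = Alt μ'` or `μ' ∈ Alt μ`. (`‖·‖` on `Fin K → ℝ`
is the sup norm.) -/
theorem stmt_6 (K : ℕ) (σ2 : ℝ) (hσ2 : 0 < σ2)
    (Alt : (Fin K → ℝ) → Set (Fin K → ℝ))
    (hAlt : ∀ μ μ' : Fin K → ℝ, Alt μ = Alt μ' ∨ μ' ∈ Alt μ)
    (μ μ' : Fin K → ℝ) (h1 : (Alt μ).Nonempty) (h2 : (Alt μ').Nonempty) :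
    Real.sqrt (Tinv K σ2 Alt μ) - Real.sqrt (Tinv K σ2 Alt μ') ≤
      (1 / Real.sqrt (2 * σ2)) * ‖μ - μ'‖ := by
  have h2σ : (0:ℝ) < 2 * σ2 := by linarith
  have hs2 : (0:ℝ) < Real.sqrt (2 * σ2) := Real.sqrt_pos.mpr h2σ
  set s2 := Real.sqrt (2 * σ2) with hs2def
  set D : ℝ := ‖μ - μ'‖ / s2 with hDdef
  have hDnn : 0 ≤ D := div_nonneg (norm_nonneg _) hs2.le
  have hRHS : (1 / s2) * ‖μ - μ'‖ = D := by rw [hDdef]; ring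
  rw [hRHS]
  have hS_nonneg : ∀ ν w, (∀ i, 0 ≤ w i) → ∀ y ∈ Sset K σ2 Alt ν w, 0 ≤ y := by
    rintro ν w hw y ⟨l, _, rfl⟩
    exact Finset.sum_nonneg fun i _ => div_nonneg (mul_nonneg (hw i) (sq_nonneg _)) h2σ.le
  have hS_bdd : ∀ ν w, (∀ i, 0 ≤ w i) → BddBelow (Sset K σ2 Alt ν w) :=
    fun ν w hw => ⟨0, fun y hy => hS_nonneg ν w hw y hy⟩
  have hf_nonneg : ∀ ν w, (∀ i, 0 ≤ w i) → 0 ≤ sInf (Sset K σ2 Alt ν w) :=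
    fun ν w hw => Real.sInf_nonneg (hS_nonneg ν w hw)
  have hsum_le : ∀ (ν l : Fin K → ℝ) (w : Fin K → ℝ), w ∈ stdSimplex ℝ (Fin K) →
      (∑ i, w i * (ν i - l i) ^ 2 / (2 * σ2)) ≤ ‖ν - l‖ ^ 2 / (2 * σ2) := by
    intro ν l w hw
    rw [← Finset.sum_div]
    have h := normw_sum_le_sq K w (ν - l) hw
    simp only [Pi.sub_apply] at h
    exact div_le_div_of_nonneg_right h h2σ.le
  have hsqrt_elem : ∀ (ν l : Fin K → ℝ) (w : Fin K → ℝ), (∀ i, 0 ≤ w i) →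
      Real.sqrt (∑ i, w i * (ν i - l i) ^ 2 / (2 * σ2)) =
        Real.sqrt (∑ i, w i * (ν i - l i) ^ 2) / s2 := by
    intro ν l w hw
    rw [← Finset.sum_div, Real.sqrt_div
      (Finset.sum_nonneg fun i _ => mul_nonneg (hw i) (sq_nonneg _))]
  have htri : ∀ (l : Fin K → ℝ) (w : Fin K → ℝ), w ∈ stdSimplex ℝ (Fin K) →
      Real.sqrt (∑ i, w i * (μ i - l i) ^ 2 / (2 * σ2)) ≤
        Real.sqrt (∑ i, w i * (μ' i - l i) ^ 2 / (2 * σ2)) + D := by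
    intro l w hw
    rw [hsqrt_elem μ l w hw.1, hsqrt_elem μ' l w hw.1, hDdef, ← add_div]
    apply div_le_div_of_nonneg_right ?_ hs2.le
    have key := normw_triangle K w (fun i => μ i - μ' i) (fun i => μ' i - l i) hw.1
    have e : ∀ i, (μ i - μ' i) + (μ' i - l i) = μ i - l i := fun i => by ring
    simp only [e] at key
    have hb := normw_le_norm K w (μ - μ') hw
    simp only [Pi.sub_apply] at hb
    calc Real.sqrt (∑ i, w i * (μ i - l i) ^ 2)
        ≤ Real.sqrt (∑ i, w i * (μ i - μ' i) ^ 2) +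
            Real.sqrt (∑ i, w i * (μ' i - l i) ^ 2) := key
      _ ≤ ‖μ - μ'‖ + Real.sqrt (∑ i, w i * (μ' i - l i) ^ 2) := by
          exact add_le_add_left hb _
      _ = Real.sqrt (∑ i, w i * (μ' i - l i) ^ 2) + ‖μ - μ'‖ := by ring
  have hD2 : ‖μ - μ'‖ ^ 2 / (2 * σ2) = D ^ 2 := by
    rw [hDdef, div_pow, hs2def, Real.sq_sqrt h2σ.le]
  rcases hAlt μ μ' with hEq | hmem
  · -- Alt μ = Alt μ'
    obtain ⟨l', hl'⟩ := h2
    have hbddA' : BddAbove {x | ∃ w ∈ stdSimplex ℝ (Fin K), x = sInf (Sset K σ2 Alt μ' w)} := by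
      refine ⟨‖μ' - l'‖ ^ 2 / (2 * σ2), ?_⟩
      rintro x ⟨w, hw, rfl⟩
      exact (csInf_le (hS_bdd μ' w hw.1) ⟨l', hl', rfl⟩).trans (hsum_le μ' l' w hw)
    set C : ℝ := Real.sqrt (Tinv K σ2 Alt μ') + D with hCdef
    have hCnn : 0 ≤ C := by positivity
    have hmain : Real.sqrt (Tinv K σ2 Alt μ) ≤ C := by
      rw [Real.sqrt_le_left hCnn, Tinv_eq]
      refine Real.sSup_le ?_ (by positivity)
      rintro x ⟨w, hw, rfl⟩
      have hkey : Real.sqrt (sInf (Sset K σ2 Alt μ w)) ≤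
          Real.sqrt (sInf (Sset K σ2 Alt μ' w)) + D := by
        refine le_of_forall_pos_le_add fun ε hε => ?_
        have hne' : (Sset K σ2 Alt μ' w).Nonempty := ⟨_, ⟨l', hl', rfl⟩⟩
        obtain ⟨y, ⟨l, hl, rfl⟩, hy⟩ :=
          Real.lt_sInf_add_pos hne' (show (0:ℝ) < ε ^ 2 by positivity)
        have hlμ : l ∈ Alt μ := hEq ▸ hl
        have step1 : sInf (Sset K σ2 Alt μ w) ≤ ∑ i, w i * (μ i - l i) ^ 2 / (2 * σ2) :=
          csInf_le (hS_bdd μ w hw.1) ⟨l, hlμ, rfl⟩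
        have step4 : Real.sqrt (sInf (Sset K σ2 Alt μ' w) + ε ^ 2) ≤
            Real.sqrt (sInf (Sset K σ2 Alt μ' w)) + ε := by
          have h := sqrt_subadd (hf_nonneg μ' w hw.1) (sq_nonneg ε)
          rwa [Real.sqrt_sq hε.le] at h
        calc Real.sqrt (sInf (Sset K σ2 Alt μ w))
            ≤ Real.sqrt (∑ i, w i * (μ i - l i) ^ 2 / (2 * σ2)) := Real.sqrt_le_sqrt step1
          _ ≤ Real.sqrt (∑ i, w i * (μ' i - l i) ^ 2 / (2 * σ2)) + D := htri l w hw
          _ ≤ Real.sqrt (sInf (Sset K σ2 Alt μ' w) + ε ^ 2) + D :=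
              add_le_add_left (Real.sqrt_le_sqrt hy.le) D
          _ ≤ Real.sqrt (sInf (Sset K σ2 Alt μ' w)) + ε + D := add_le_add_left step4 D
          _ = Real.sqrt (sInf (Sset K σ2 Alt μ' w)) + D + ε := by ring
      have h2' : Real.sqrt (sInf (Sset K σ2 Alt μ' w)) ≤ Real.sqrt (Tinv K σ2 Alt μ') := by
        refine Real.sqrt_le_sqrt ?_
        rw [Tinv_eq]
        exact le_csSup hbddA' ⟨w, hw, rfl⟩
      have hle : Real.sqrt (sInf (Sset K σ2 Alt μ w)) ≤ C := by
        rw [hCdef]; linarith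
      calc sInf (Sset K σ2 Alt μ w)
          = Real.sqrt (sInf (Sset K σ2 Alt μ w)) ^ 2 := (Real.sq_sqrt (hf_nonneg μ w hw.1)).symm
        _ ≤ C ^ 2 := pow_le_pow_left₀ (Real.sqrt_nonneg _) hle 2
    have := Real.sqrt_nonneg (Tinv K σ2 Alt μ')
    rw [hCdef] at hmain
    linarith
  · -- μ' ∈ Alt μ
    have hmain : Real.sqrt (Tinv K σ2 Alt μ) ≤ D := by
      rw [Real.sqrt_le_left hDnn, Tinv_eq]
      refine Real.sSup_le ?_ (by positivity)
      rintro x ⟨w, hw, rfl⟩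
      calc sInf (Sset K σ2 Alt μ w)
          ≤ ∑ i, w i * (μ i - μ' i) ^ 2 / (2 * σ2) := csInf_le (hS_bdd μ w hw.1) ⟨μ', hmem, rfl⟩
        _ ≤ ‖μ - μ'‖ ^ 2 / (2 * σ2) := hsum_le μ μ' w hw
        _ = D ^ 2 := hD2
    have := Real.sqrt_nonneg (Tinv K σ2 Alt μ')
    linarith
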